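/- Suppose C_I < βA/((μ+r)(μ+r+ρ)) and β²σs/((μ+r)σm²) ≤ C_I. If 1 < R0 ≤ 1 + M, then the set of endemic equilibria equals the singleton {((μ+β+ρ)/σm, μ(R0−1)/σm, μβ(R0−1)/(σm(μ+r)))}. If R0 > 1 + M, then the set of endemic equilibria equals the singleton {(S1, μR0/σm − μS1/(μ+β+ρ), βR0/σm − βS1/(μ+β+ρ) − rC_I/μ)} where S1 = ((μ+β+ρ)/(2σm))·(R0 − p + q − √((R0−p−q)² − 4pq)). -/

import Mathlib

/-- An endemic equilibrium of the disease-severity-structured model. -/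
def IsEndemicEquilibrium (A μ ρ r β σm σs CI : ℝ) (x : ℝ × ℝ × ℝ) : Prop :=
  0 < x.1 ∧ 0 < x.2.1 ∧ 0 < x.2.2 ∧
  A - σm * x.1 * x.2.1 - σs * x.1 * max 0 (x.2.2 - CI) - μ * x.1 = 0 ∧
  σm * x.1 * x.2.1 + σs * x.1 * max 0 (x.2.2 - CI) - (μ + β + ρ) * x.2.1 = 0 ∧
  β * x.2.1 - min (r * x.2.2) (r * CI) - μ * x.2.2 = 0

private lemma pos_of_mul_pos' {a b : ℝ} (h : 0 < a * b) (hb : 0 < b) : 0 < a := by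
  by_contra hc
  push_neg at hc
  nlinarith

private lemma nonneg_of_mul_nonneg' {a b : ℝ} (h : 0 ≤ a * b) (hb : 0 < b) : 0 ≤ a := by
  by_contra hc
  push_neg at hc
  nlinarith

private lemma neg_of_mul_neg' {a b : ℝ} (h : a * b < 0) (hb : 0 < b) : a < 0 := by
  by_contra hc
  push_neg at hc
  nlinarith

set_option maxHeartbeats 4000000 in
/-- Theorem 2.1 of the paper. -/
theorem stmt10 (A μ ρ r β σm σs CI : ℝ)
    (hA : 0 < A) (hμ : 0 < μ) (hρ : 0 < ρ) (hr : 0 < r) (hβ : 0 < β)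
    (hσm : 0 < σm) (hσs : 0 < σs) (hCI : 0 < CI)
    (R0 p q M : ℝ)
    (hR0 : R0 = A * σm / (μ * (μ + β + ρ)))
    (hp : p = (μ + r) * σm * σs * CI / (μ * (μ * σm + β * σs)))
    (hq : q = μ * σm / (μ * σm + β * σs))
    (hM : M = σm * (μ + r) * CI / (μ * β))
    (hsmall : CI < β * A / ((μ + r) * (μ + r + ρ)))
    (hbig : β ^ 2 * σs / ((μ + r) * σm ^ 2) ≤ CI)
    (S1 : ℝ)
    (hS1 : S1 = (μ + β + ρ) / (2 * σm)
      * (R0 - p + q - Real.sqrt ((R0 - p - q) ^ 2 - 4 * p * q))) :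
    (1 < R0 → R0 ≤ 1 + M →
      {x : ℝ × ℝ × ℝ | IsEndemicEquilibrium A μ ρ r β σm σs CI x}
        = {((μ + β + ρ) / σm, μ * (R0 - 1) / σm,
            μ * β * (R0 - 1) / (σm * (μ + r)))}) ∧
    (R0 > 1 + M →
      {x : ℝ × ℝ × ℝ | IsEndemicEquilibrium A μ ρ r β σm σs CI x}
        = {(S1, μ * R0 / σm - μ * S1 / (μ + β + ρ),
            β * R0 / σm - β * S1 / (μ + β + ρ) - r * CI / μ)}) := by
  have hK : (0:ℝ) < μ + β + ρ := by positivity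
  have hD : (0:ℝ) < μ * σm + β * σs := by positivity
  have hμr : (0:ℝ) < μ + r := by positivity
  have hKne : (μ + β + ρ) ≠ 0 := ne_of_gt hK
  have hDne : (μ * σm + β * σs) ≠ 0 := ne_of_gt hD
  have hμne : μ ≠ 0 := ne_of_gt hμ
  have hβne : β ≠ 0 := ne_of_gt hβ
  have hσmne : σm ≠ 0 := ne_of_gt hσm
  have hA' : A * σm = μ * (μ + β + ρ) * R0 := by rw [hR0]; field_simp
  have hp' : p * (μ * (μ * σm + β * σs)) = (μ + r) * σm * σs * CI := by
    rw [hp]; field_simp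
  have hq' : q * (μ * σm + β * σs) = μ * σm := by rw [hq]; field_simp
  have hM' : M * (μ * β) = σm * (μ + r) * CI := by rw [hM]; field_simp
  have hMpos : 0 < M := by rw [hM]; positivity
  have hppos : 0 < p := by rw [hp]; positivity
  have hqpos : 0 < q := by rw [hq]; positivity
  have hR0pos : 0 < R0 := by rw [hR0]; positivity
  obtain ⟨s, hs⟩ : ∃ x : ℝ, x = R0 - p + q := ⟨_, rfl⟩
  obtain ⟨Δ, hΔdef⟩ : ∃ x : ℝ, x = (R0 - p - q) ^ 2 - 4 * p * q := ⟨_, rfl⟩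
  rw [show R0 - p + q - Real.sqrt ((R0 - p - q) ^ 2 - 4 * p * q) = s - Real.sqrt Δ by
    rw [hs, hΔdef]] at hS1
  have hΔrel : Δ = s ^ 2 - 4 * (R0 * q) := by rw [hΔdef, hs]; ring
  have hbig' : β ^ 2 * σs ≤ (μ + r) * σm ^ 2 * CI := by
    rw [div_le_iff₀ (by positivity)] at hbig; linarith
  have hkeyM : 1 + p - q ≤ M := by
    have key : (M - (1 + p - q)) * (μ * β * (μ * σm + β * σs))
        = μ * ((μ + r) * σm ^ 2 * CI - β ^ 2 * σs) := by
      linear_combination ((μ * σm + β * σs)) * hM' - β * hp' + (μ * β) * hq'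
    have h0 : 0 ≤ (M - (1 + p - q)) * (μ * β * (μ * σm + β * σs)) := by
      rw [key]
      have : 0 ≤ (μ + r) * σm ^ 2 * CI - β ^ 2 * σs := by linarith
      positivity
    have := nonneg_of_mul_nonneg' h0 (by positivity)
    linarith
  have I1 : (1 - s + R0 * q) * (μ * (μ * σm + β * σs)) = μ * β * σs * (1 + M - R0) := by
    rw [hs]; linear_combination hp' + (-σs) * hM' + (R0 * μ - μ) * hq'
  have I2 : (((R0 - M) ^ 2 - s * (R0 - M) + R0 * q) * ((μ * σm + β * σs) * β * μ))
      = μ * σm ^ 2 * (μ + r) * CI * (1 - R0 + M) := by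
    rw [hs]
    linear_combination (-(μ * σm * (1 - R0 + M)) - σs * β * (M - R0)
      - 2 * ((R0 - M) * (μ * σm + β * σs) - μ * σm)) * hM' + (μ * β * M) * hq'
      + (-(β * (M - R0))) * hp'
  have J1 : s * ((μ * σm + β * σs) * μ * (μ + β + ρ))
      = σm * ((μ * σm + β * σs) * A + μ ^ 2 * (μ + β + ρ) - (μ + β + ρ) * σs * (μ + r) * CI) := by
    rw [hs]
    linear_combination (-(μ * σm + β * σs)) * hA' + (-(μ + β + ρ)) * hp'
      + (μ * (μ + β + ρ)) * hq'
  have J2 : R0 * q * ((μ + β + ρ) * (μ * σm + β * σs)) = A * σm ^ 2 := by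
    linear_combination (R0 * (μ + β + ρ)) * hq' + (-σm) * hA'
  -- case A characterization
  have caseA : ∀ S Im Is : ℝ, 0 < Im → Is ≤ CI →
      (A - σm * S * Im - σs * S * max 0 (Is - CI) - μ * S = 0) →
      (σm * S * Im + σs * S * max 0 (Is - CI) - (μ + β + ρ) * Im = 0) →
      (β * Im - min (r * Is) (r * CI) - μ * Is = 0) →
      σm * S = μ + β + ρ ∧ σm * Im = μ * (R0 - 1) ∧ (μ + r) * Is = β * Im ∧ R0 ≤ 1 + M := by
    intro S Im Is hIm hle e1 e2 e3
    rw [max_eq_left (by linarith only [hle] : Is - CI ≤ 0)] at e1 e2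
    rw [min_eq_left (mul_le_mul_of_nonneg_left hle hr.le)] at e3
    have hSeq : σm * S = μ + β + ρ := by
      have h0 : (σm * S - (μ + β + ρ)) * Im = 0 := by linarith only [e2]
      rcases mul_eq_zero.mp h0 with h | h
      · linarith
      · exact absurd h (ne_of_gt hIm)
    have hImeq : (μ + β + ρ) * (σm * Im) = (μ + β + ρ) * (μ * (R0 - 1)) := by
      linear_combination (-σm) * e1 - (σm * Im + μ) * hSeq + hA'
    have hImeq' : σm * Im = μ * (R0 - 1) := mul_left_cancel₀ hKne hImeq
    have hIseq : (μ + r) * Is = β * Im := by linarith only [e3]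
    refine ⟨hSeq, hImeq', hIseq, ?_⟩
    have h1 : β * μ * (R0 - 1) = σm * ((μ + r) * Is) := by
      linear_combination (-β) * hImeq' - σm * hIseq
    have h2 : σm * ((μ + r) * Is) ≤ σm * ((μ + r) * CI) := by
      have := mul_le_mul_of_nonneg_left hle hμr.le
      exact mul_le_mul_of_nonneg_left this hσm.le
    have h3 : σm * ((μ + r) * CI) = M * (μ * β) := by linear_combination -hM'
    by_contra hcon
    push_neg at hcon
    have h4 : M * (μ * β) < (R0 - 1) * (μ * β) :=
      mul_lt_mul_of_pos_right (by linarith) (mul_pos hμ hβ)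
    linarith only [h1, h2, h3, h4]
  -- case B characterization
  have caseB : ∀ S Im Is : ℝ, 0 < S → 0 < Im → CI < Is →
      (A - σm * S * Im - σs * S * max 0 (Is - CI) - μ * S = 0) →
      (σm * S * Im + σs * S * max 0 (Is - CI) - (μ + β + ρ) * Im = 0) →
      (β * Im - min (r * Is) (r * CI) - μ * Is = 0) →
      ((σm * S) ^ 2 - s * (μ + β + ρ) * (σm * S) + R0 * q * (μ + β + ρ) ^ 2 = 0) ∧
        σm * S < (μ + β + ρ) * (R0 - M) ∧ (μ + β + ρ) * Im = A - μ * S ∧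
        μ * Is = β * Im - r * CI := by
    intro S Im Is hS hIm hgt e1 e2 e3
    rw [max_eq_right (by linarith only [hgt] : (0:ℝ) ≤ Is - CI)] at e1 e2
    rw [min_eq_right (mul_le_mul_of_nonneg_left hgt.le hr.le)] at e3
    have hsum : (μ + β + ρ) * Im = A - μ * S := by linarith only [e1, e2]
    have hIsv : μ * Is = β * Im - r * CI := by linarith only [e3]
    have hquadS : ((μ * σm + β * σs) * μ * S ^ 2
        - ((μ * σm + β * σs) * A + μ ^ 2 * (μ + β + ρ) - (μ + β + ρ) * σs * (μ + r) * CI) * S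
        + μ * (μ + β + ρ) * A) = 0 := by
      linear_combination (-(μ + β + ρ) * μ) * e2 + (-(μ + β + ρ) * σs * S) * e3
        + ((μ * σm + β * σs) * S - μ * (μ + β + ρ)) * hsum
    have htu : ((σm * S) ^ 2 - s * (μ + β + ρ) * (σm * S) + R0 * q * (μ + β + ρ) ^ 2)
        * ((μ * σm + β * σs) * μ) = 0 := by
      linear_combination σm ^ 2 * hquadS + (-(σm * S)) * J1 + (μ * (μ + β + ρ)) * J2
    have htu' : (σm * S) ^ 2 - s * (μ + β + ρ) * (σm * S) + R0 * q * (μ + β + ρ) ^ 2 = 0 := by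
      rcases mul_eq_zero.mp htu with h | h
      · exact h
      · exact absurd h (by positivity)
    have hd : β * (A - μ * S) - (μ + β + ρ) * (μ + r) * CI
        = (μ + β + ρ) * (μ * (Is - CI)) := by
      linear_combination (-β) * hsum + (-(μ + β + ρ)) * hIsv
    have hstar : (μ + β + ρ) * (μ + r) * CI < β * (A - μ * S) := by
      have := mul_pos hK (mul_pos hμ (sub_pos.mpr hgt))
      linarith only [hd, this]
    have he : ((μ + β + ρ) * (R0 - M) - σm * S) * (μ * β)
        = σm * (β * (A - μ * S) - (μ + β + ρ) * (μ + r) * CI) := by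
      linear_combination (-β) * hA' + (-(μ + β + ρ)) * hM'
    have hu : σm * S < (μ + β + ρ) * (R0 - M) := by
      have h0 : 0 < ((μ + β + ρ) * (R0 - M) - σm * S) * (μ * β) := by
        rw [he]
        exact mul_pos hσm (by linarith only [hstar])
      have := pos_of_mul_pos' h0 (mul_pos hμ hβ)
      linarith only [this]
    exact ⟨htu', hu, hsum, hIsv⟩
  constructor
  · -- branch 1 : 1 < R0 ≤ 1 + M
    intro h1 h2
    have hIsle : μ * β * (R0 - 1) / (σm * (μ + r)) ≤ CI := by
      rw [div_le_iff₀ (by positivity)]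
      have h5 := mul_le_mul_of_nonneg_right (show R0 - 1 ≤ M by linarith)
        (mul_pos hμ hβ).le
      linarith only [h5, hM']
    apply Set.eq_singleton_iff_unique_mem.mpr
    constructor
    · simp only [Set.mem_setOf_eq, IsEndemicEquilibrium]
      have hmax : max 0 (μ * β * (R0 - 1) / (σm * (μ + r)) - CI) = 0 :=
        max_eq_left (by linarith only [hIsle])
      have hmin : min (r * (μ * β * (R0 - 1) / (σm * (μ + r)))) (r * CI)
          = r * (μ * β * (R0 - 1) / (σm * (μ + r))) :=
        min_eq_left (mul_le_mul_of_nonneg_left hIsle hr.le)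
      refine ⟨by positivity, ?_, ?_, ?_, ?_, ?_⟩
      · have : 0 < R0 - 1 := by linarith
        positivity
      · have : 0 < R0 - 1 := by linarith
        positivity
      · rw [hmax]
        field_simp
        linear_combination hA'
      · rw [hmax]
        field_simp
        ring
      · rw [hmin]
        field_simp
        ring
    · rintro ⟨S, Im, Is⟩ ⟨hS, hIm, hIs, e1, e2, e3⟩
      rcases le_or_gt Is CI with hle | hgt
      · obtain ⟨hSeq, hImeq, hIseq, _⟩ := caseA S Im Is hIm hle e1 e2 e3
        simp only [Prod.mk.injEq]
        refine ⟨?_, ?_, ?_⟩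
        · field_simp
          linarith only [hSeq]
        · field_simp
          linarith only [hImeq]
        · rw [eq_div_iff (by positivity)]
          linear_combination σm * hIseq + β * hImeq
      · obtain ⟨htu', hu, hsum, hIsv⟩ := caseB S Im Is hS hIm hgt e1 e2 e3
        exfalso
        have hfT : 0 ≤ (R0 - M) ^ 2 - s * (R0 - M) + R0 * q := by
          have h8 : 0 ≤ μ * σm ^ 2 * (μ + r) * CI * (1 - R0 + M) := by
            have : (0:ℝ) ≤ 1 - R0 + M := by linarith only [h2]
            positivity
          rw [← I2] at h8
          exact nonneg_of_mul_nonneg' h8 (by positivity)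
        have hvert : 2 * (R0 - M) ≤ s := by rw [hs]; linarith only [hkeyM, h2]
        have hc1 : 0 < (μ + β + ρ) * (R0 - M) - σm * S := by linarith only [hu]
        have h10 : 0 ≤ (μ + β + ρ) * (s - 2 * (R0 - M)) :=
          mul_nonneg hK.le (by linarith only [hvert])
        have hc2 : 0 < s * (μ + β + ρ) - (μ + β + ρ) * (R0 - M) - σm * S := by
          linarith only [h10, hc1]
        have hid : ((μ + β + ρ) * (R0 - M) - σm * S)
            * (s * (μ + β + ρ) - (μ + β + ρ) * (R0 - M) - σm * S)
            = -((μ + β + ρ) ^ 2 * ((R0 - M) ^ 2 - s * (R0 - M) + R0 * q))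
              + ((σm * S) ^ 2 - s * (μ + β + ρ) * (σm * S) + R0 * q * (μ + β + ρ) ^ 2) := by
          ring
        have h11 : 0 ≤ (μ + β + ρ) ^ 2 * ((R0 - M) ^ 2 - s * (R0 - M) + R0 * q) :=
          mul_nonneg (by positivity) hfT
        have h12 := mul_pos hc1 hc2
        linarith only [hid, h11, h12, htu']
  · -- branch 2 : R0 > 1 + M
    intro h2
    have h1 : 1 < R0 := by linarith only [h2, hMpos]
    have hf1 : 1 - s + R0 * q < 0 := by
      have h8 : μ * β * σs * (1 + M - R0) < 0 :=
        mul_neg_of_pos_of_neg (by positivity) (by linarith only [h2])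
      rw [← I1] at h8
      exact neg_of_mul_neg' h8 (by positivity)
    have hfT : (R0 - M) ^ 2 - s * (R0 - M) + R0 * q < 0 := by
      have h8 : μ * σm ^ 2 * (μ + r) * CI * (1 - R0 + M) < 0 :=
        mul_neg_of_pos_of_neg (by positivity) (by linarith only [h2])
      rw [← I2] at h8
      exact neg_of_mul_neg' h8 (by positivity)
    have hΔpos : (s - 2) ^ 2 < Δ := by
      have : Δ - (s - 2) ^ 2 = -4 * (1 - s + R0 * q) := by rw [hΔrel]; ring
      linarith only [this, hf1]
    have hΔnn : 0 ≤ Δ := le_trans (sq_nonneg _) hΔpos.le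
    have hsq : Real.sqrt Δ ^ 2 = Δ := Real.sq_sqrt hΔnn
    have hsd1 : s - 2 < Real.sqrt Δ :=
      lt_of_pow_lt_pow_left₀ 2 (Real.sqrt_nonneg Δ) (by rw [hsq]; exact hΔpos)
    have hsd2 : 2 - s < Real.sqrt Δ :=
      lt_of_pow_lt_pow_left₀ 2 (Real.sqrt_nonneg Δ)
        (by rw [hsq, show (2 - s)^2 = (s - 2)^2 by ring]; exact hΔpos)
    have hsplus : 0 < s + Real.sqrt Δ := by linarith only [hsd2, Real.sqrt_nonneg Δ]
    have hprod : (s - Real.sqrt Δ) * (s + Real.sqrt Δ) = 4 * (R0 * q) := by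
      linear_combination -hsq - hΔrel
    have hroot1 : 0 < s - Real.sqrt Δ := by
      by_contra hc
      push_neg at hc
      have := mul_nonpos_of_nonpos_of_nonneg hc hsplus.le
      linarith only [this, hprod, mul_pos hR0pos hqpos]
    have ht1T : s - Real.sqrt Δ < 2 * (R0 - M) := by
      by_contra hcon
      push_neg at hcon
      have ha1 : (0:ℝ) ≤ (s - Real.sqrt Δ) - 2 * (R0 - M) := by linarith only [hcon]
      have ha2 : (0:ℝ) ≤ (s + Real.sqrt Δ) - 2 * (R0 - M) := by
        have := Real.sqrt_nonneg Δ
        linarith only [this, hcon]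
      have hid3 : ((s - Real.sqrt Δ) - 2 * (R0 - M)) * ((s + Real.sqrt Δ) - 2 * (R0 - M))
          = 4 * ((R0 - M) ^ 2 - s * (R0 - M) + R0 * q) + (Δ - Real.sqrt Δ ^ 2)
            + (s ^ 2 - 4 * (R0 * q) - Δ) := by
        ring
      have := mul_nonneg ha1 ha2
      rw [hid3, hsq] at this
      have h0 : s ^ 2 - 4 * (R0 * q) - Δ = 0 := by rw [hΔrel]; ring
      rw [h0] at this
      linarith only [this, hfT]
    have hS1t : σm * S1 = (μ + β + ρ) * (s - Real.sqrt Δ) / 2 := by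
      rw [hS1]; field_simp
    have hS1pos : 0 < S1 := by
      have h0 : 0 < σm * S1 := by
        rw [hS1t]
        positivity
      have : σm * S1 = S1 * σm := mul_comm _ _
      exact pos_of_mul_pos' (this ▸ h0) hσm
    have h14 : (μ + β + ρ) * (s - Real.sqrt Δ) < (μ + β + ρ) * 2 :=
      mul_lt_mul_of_pos_left (by linarith) hK
    have h15 : σm * S1 < (μ + β + ρ) * R0 := by
      have h0 := mul_lt_mul_of_pos_left h1 hK
      linarith only [hS1t, h14, h0]
    have h16 : σm * S1 < (μ + β + ρ) * (R0 - M) := by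
      have h0 := mul_lt_mul_of_pos_left ht1T hK
      linarith only [hS1t, h0]
    have hIm1pos : 0 < μ * R0 / σm - μ * S1 / (μ + β + ρ) := by
      rw [sub_pos, div_lt_div_iff₀ hK hσm]
      have := mul_lt_mul_of_pos_left h15 hμ
      linarith only [this]
    have hIs1gt : CI < β * R0 / σm - β * S1 / (μ + β + ρ) - r * CI / μ := by
      have hrw : β * R0 / σm - β * S1 / (μ + β + ρ) - r * CI / μ
          = (β * μ * ((μ + β + ρ) * R0 - σm * S1) - r * CI * σm * (μ + β + ρ))
            / (σm * (μ + β + ρ) * μ) := by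
        field_simp
      rw [hrw, lt_div_iff₀ (by positivity)]
      have h17 := mul_lt_mul_of_pos_left
        (show (μ + β + ρ) * M < (μ + β + ρ) * R0 - σm * S1 by
          have := mul_lt_mul_of_pos_left ht1T hK
          linarith only [hS1t, this, mul_lt_mul_of_pos_left ht1T hK]) (mul_pos hβ hμ)
      -- β*μ*((μ+β+ρ)*M) = (μ+β+ρ)*(M*(μ*β)) = (μ+β+ρ)*σm*(μ+r)*CI
      have h18 : β * μ * ((μ + β + ρ) * M) = (μ + β + ρ) * (σm * (μ + r) * CI) := by
        linear_combination (μ + β + ρ) * hM'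
      linarith only [h17, h18]
    obtain ⟨Im1, hIm1⟩ : ∃ x : ℝ, x = μ * R0 / σm - μ * S1 / (μ + β + ρ) := ⟨_, rfl⟩
    obtain ⟨Is1, hIs1d⟩ : ∃ x : ℝ, x = β * R0 / σm - β * S1 / (μ + β + ρ) - r * CI / μ :=
      ⟨_, rfl⟩
    have hIm1pos' : 0 < Im1 := by rw [hIm1]; exact hIm1pos
    have hIs1gt' : CI < Is1 := by rw [hIs1d]; exact hIs1gt
    have hIm1sum : (μ + β + ρ) * Im1 = A - μ * S1 := by
      rw [hIm1, div_sub_div _ _ hσmne hKne, mul_div_assoc', div_eq_iff (mul_ne_zero hσmne hKne)]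
      linear_combination (-(μ + β + ρ)) * hA'
    have hIs1e3 : μ * Is1 = β * Im1 - r * CI := by
      rw [hIs1d, hIm1]
      field_simp
    -- quadratic for S1
    have hu1 : (σm * S1) ^ 2 - s * (μ + β + ρ) * (σm * S1) + R0 * q * (μ + β + ρ) ^ 2 = 0 := by
      rw [hS1t]
      linear_combination ((μ + β + ρ) ^ 2 / 4) * hsq + ((μ + β + ρ) ^ 2 / 4) * hΔrel
    have hquadS1 : ((μ * σm + β * σs) * μ * S1 ^ 2
        - ((μ * σm + β * σs) * A + μ ^ 2 * (μ + β + ρ) - (μ + β + ρ) * σs * (μ + r) * CI) * S1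
        + μ * (μ + β + ρ) * A) * σm ^ 2 = 0 := by
      linear_combination ((μ * σm + β * σs) * μ) * hu1 + (σm * S1) * J1
        + (-(μ * (μ + β + ρ))) * J2
    have hquadS1' : (μ * σm + β * σs) * μ * S1 ^ 2
        - ((μ * σm + β * σs) * A + μ ^ 2 * (μ + β + ρ) - (μ + β + ρ) * σs * (μ + r) * CI) * S1
        + μ * (μ + β + ρ) * A = 0 := by
      rcases mul_eq_zero.mp hquadS1 with h | h
      · exact h
      · exact absurd h (by positivity)
    have he2m : (σm * S1 * Im1 + σs * S1 * (Is1 - CI) - (μ + β + ρ) * Im1)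
        * (μ * (μ + β + ρ)) = 0 := by
      linear_combination (-1) * hquadS1'
        + ((μ * σm + β * σs) * S1 - μ * (μ + β + ρ)) * hIm1sum
        + ((μ + β + ρ) * σs * S1) * hIs1e3
    have he2 : σm * S1 * Im1 + σs * S1 * (Is1 - CI) - (μ + β + ρ) * Im1 = 0 := by
      rcases mul_eq_zero.mp he2m with h | h
      · exact h
      · exact absurd h (by positivity)
    have he1 : A - σm * S1 * Im1 - σs * S1 * (Is1 - CI) - μ * S1 = 0 := by
      linear_combination (-1) * he2 - hIm1sum
    have he3 : β * Im1 - r * CI - μ * Is1 = 0 := by linear_combination (-1) * hIs1e3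
    apply Set.eq_singleton_iff_unique_mem.mpr
    constructor
    · simp only [Set.mem_setOf_eq, IsEndemicEquilibrium]
      rw [← hIm1, ← hIs1d]
      have hmax2 : max 0 (Is1 - CI) = Is1 - CI :=
        max_eq_right (by linarith only [hIs1gt'])
      have hmin2 : min (r * Is1) (r * CI) = r * CI :=
        min_eq_right (mul_le_mul_of_nonneg_left hIs1gt'.le hr.le)
      rw [hmax2, hmin2]
      exact ⟨hS1pos, hIm1pos', lt_trans hCI hIs1gt', he1, he2, he3⟩
    · rintro ⟨S, Im, Is⟩ ⟨hS, hIm, hIs, e1, e2, e3⟩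
      rcases le_or_gt Is CI with hle | hgt
      · exfalso
        obtain ⟨hSeq, hImeq, hIseq, hcon⟩ := caseA S Im Is hIm hle e1 e2 e3
        linarith only [hcon, h2]
      · obtain ⟨htu', hu, hsum, hIsv⟩ := caseB S Im Is hS hIm hgt e1 e2 e3
        have hc1 : 0 < (μ + β + ρ) * (R0 - M) - σm * S := by linarith only [hu]
        have hTu : (μ + β + ρ) * (R0 - M) - s * (μ + β + ρ) + σm * S < 0 := by
          by_contra hcon
          push_neg at hcon
          have h0 := mul_nonneg hc1.le hcon
          have hid2 : ((μ + β + ρ) * (R0 - M) - σm * S)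
              * ((μ + β + ρ) * (R0 - M) - s * (μ + β + ρ) + σm * S)
              = (μ + β + ρ) ^ 2 * ((R0 - M) ^ 2 - s * (R0 - M) + R0 * q)
                - ((σm * S) ^ 2 - s * (μ + β + ρ) * (σm * S) + R0 * q * (μ + β + ρ) ^ 2) := by
            ring
          have h13 : (μ + β + ρ) ^ 2 * ((R0 - M) ^ 2 - s * (R0 - M) + R0 * q) < 0 :=
            mul_neg_of_pos_of_neg (by positivity) hfT
          linarith only [hid2, h0, h13, htu']
        have h2t : 2 * (σm * S) ≤ (μ + β + ρ) * s := by
          by_contra hcon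
          push_neg at hcon
          linarith only [hTu, hu, hcon]
        have hΔu : Δ * (μ + β + ρ) ^ 2 = ((μ + β + ρ) * s - 2 * (σm * S)) ^ 2 := by
          linear_combination ((μ + β + ρ) ^ 2) * hΔrel - 4 * htu'
        have hsqrt : Real.sqrt Δ = ((μ + β + ρ) * s - 2 * (σm * S)) / (μ + β + ρ) := by
          have hΔeq : Δ = (((μ + β + ρ) * s - 2 * (σm * S)) / (μ + β + ρ)) ^ 2 := by
            rw [div_pow, eq_div_iff (by positivity)]
            linear_combination hΔu
          rw [hΔeq, Real.sqrt_sq (div_nonneg (by linarith only [h2t]) hK.le)]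
        have hSS1 : S1 = S := by
          rw [hS1, hsqrt]
          field_simp
          ring
        simp only [Prod.mk.injEq]
        rw [← hIm1, ← hIs1d]
        have hImIm1 : Im = Im1 := by
          apply mul_left_cancel₀ hKne
          rw [hIm1sum, hSS1, hsum]
        have hIsIs1 : Is = Is1 := by
          apply mul_left_cancel₀ hμne
          rw [hIs1e3, ← hImIm1, hIsv]
        exact ⟨hSS1.symm, hImIm1, hIsIs1⟩
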